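/- For integers b > θ ≥ 2, there exists p_T ∈ (0,1) such that min_{q∈[0,1]} W_{p_T}(q) = 0, where W_p(q) = p + (1-p)·Bin(b,q,θ) - q; moreover for p < p_T the minimum is negative and for p > p_T the minimum over [0,1) is positive. -/

import Mathlib

open Finset

noncomputable def myBin (b θ : ℕ) (q : ℝ) : ℝ :=
  ∑ k ∈ Finset.Icc θ b, (b.choose k : ℝ) * q ^ k * (1 - q) ^ (b - k)

lemma sum_range_one (b : ℕ) (q : ℝ) :
    ∑ k ∈ range (b+1), (b.choose k : ℝ) * q ^ k * (1 - q) ^ (b - k) = 1 := by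
  have h : (1:ℝ) = (q + (1-q))^b := by ring_nf
  rw [add_pow] at h
  rw [show ∑ k ∈ range (b+1), (b.choose k : ℝ) * q ^ k * (1 - q) ^ (b - k)
      = ∑ m ∈ range (b + 1), q ^ m * (1 - q) ^ (b - m) * (b.choose m : ℝ) from
    Finset.sum_congr rfl (fun k _ => by ring)]
  exact h.symm

lemma myBin_split (b θ : ℕ) (h : θ ≤ b) (q : ℝ) :
    myBin b θ q = 1 - ∑ k ∈ range θ, (b.choose k : ℝ) * q ^ k * (1 - q) ^ (b - k) := by
  have hs := Finset.sum_range_add_sum_Ico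
    (fun k => (b.choose k : ℝ) * q ^ k * (1 - q) ^ (b - k))
    (show θ ≤ b + 1 by omega)
  rw [sum_range_one] at hs
  unfold myBin
  rw [← Finset.Ico_add_one_right_eq_Icc]
  linarith

lemma term_nonneg (b k : ℕ) {q : ℝ} (h0 : 0 ≤ q) (h1 : q ≤ 1) :
    0 ≤ (b.choose k : ℝ) * q ^ k * (1 - q) ^ (b - k) := by
  apply mul_nonneg (mul_nonneg (by positivity) (by positivity))
  apply pow_nonneg; linarith

lemma myBin_cont (b θ : ℕ) : Continuous (myBin b θ) := by
  unfold myBin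
  exact continuous_finset_sum _ (fun k _ => by continuity)

lemma myBin_one (b θ : ℕ) (hθb : θ ≤ b) : myBin b θ 1 = 1 := by
  unfold myBin
  rw [Finset.sum_eq_single b]
  · simp
  · intro k hk hne
    simp only [Finset.mem_Icc] at hk
    rw [show (1:ℝ) - 1 = 0 by ring, zero_pow (by omega : b - k ≠ 0)]
    ring
  · intro h; exact absurd (Finset.mem_Icc.mpr ⟨hθb, le_refl b⟩) h

lemma myBin_le (b θ : ℕ) (hθ : 2 ≤ θ) {q : ℝ} (h0 : 0 ≤ q) (h1 : q ≤ 1) :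
    myBin b θ q ≤ 2^b * q^2 := by
  unfold myBin
  calc ∑ k ∈ Finset.Icc θ b, (b.choose k : ℝ) * q ^ k * (1 - q) ^ (b - k)
      ≤ ∑ k ∈ Finset.Icc θ b, (b.choose k : ℝ) * q ^ 2 := by
        apply Finset.sum_le_sum
        intro k hk
        simp only [Finset.mem_Icc] at hk
        have h2 : q ^ k ≤ q ^ 2 := pow_le_pow_of_le_one h0 h1 (by omega)
        have h3 : (1 - q) ^ (b - k) ≤ 1 := pow_le_one₀ (by linarith) (by linarith)
        calc (b.choose k : ℝ) * q ^ k * (1 - q) ^ (b - k)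
            ≤ (b.choose k : ℝ) * q ^ k * 1 := by
              apply mul_le_mul_of_nonneg_left h3
              exact mul_nonneg (by positivity) (by positivity)
          _ = (b.choose k : ℝ) * q ^ k := by ring
          _ ≤ (b.choose k : ℝ) * q ^ 2 := by
              apply mul_le_mul_of_nonneg_left h2 (by positivity)
    _ = (∑ k ∈ Finset.Icc θ b, (b.choose k : ℝ)) * q^2 := by rw [← Finset.sum_mul]
    _ ≤ 2^b * q^2 := by
        apply mul_le_mul_of_nonneg_right _ (by positivity)
        calc ∑ k ∈ Finset.Icc θ b, (b.choose k : ℝ)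
            ≤ ∑ k ∈ Finset.range (b+1), (b.choose k : ℝ) := by
              apply Finset.sum_le_sum_of_subset_of_nonneg
              · intro k hk; simp only [Finset.mem_Icc] at hk; simp; omega
              · intro k _ _; positivity
          _ = 2^b := by rw [← Nat.cast_sum, Nat.sum_range_choose]; push_cast; ring

lemma one_sub_myBin_pos (b θ : ℕ) (hθ : 2 ≤ θ) (hb : θ ≤ b) {q : ℝ} (h0 : 0 ≤ q) (h1 : q < 1) :
    0 < 1 - myBin b θ q := by
  rw [myBin_split b θ hb]
  have hmem : (0:ℕ) ∈ range θ := Finset.mem_range.mpr (by omega)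
  have hle : (b.choose 0 : ℝ) * q ^ 0 * (1 - q) ^ (b - 0)
      ≤ ∑ k ∈ range θ, (b.choose k : ℝ) * q ^ k * (1 - q) ^ (b - k) :=
    Finset.single_le_sum (fun k _ => term_nonneg b k h0 h1.le) hmem
  have hpos : (0:ℝ) < (b.choose 0 : ℝ) * q ^ 0 * (1 - q) ^ (b - 0) := by
    simp only [Nat.choose_zero_right, Nat.cast_one, pow_zero, Nat.sub_zero]
    have : (0:ℝ) < (1 - q) ^ b := pow_pos (by linarith) b
    linarith
  linarith

lemma one_sub_myBin_le (b θ : ℕ) (hθ : 2 ≤ θ) (hb : θ < b) {q : ℝ} (h0 : 0 ≤ q) (h1 : q ≤ 1) :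
    1 - myBin b θ q ≤ 2^b * (1-q)^2 := by
  rw [myBin_split b θ hb.le]
  have key : ∑ k ∈ range θ, (b.choose k : ℝ) * q ^ k * (1 - q) ^ (b - k)
      ≤ ∑ k ∈ range θ, (b.choose k : ℝ) * (1-q) ^ 2 := by
    apply Finset.sum_le_sum
    intro k hk
    simp only [Finset.mem_range] at hk
    have h2 : (1-q) ^ (b-k) ≤ (1-q) ^ 2 := pow_le_pow_of_le_one (by linarith) (by linarith) (by omega)
    have h3 : q ^ k ≤ 1 := pow_le_one₀ h0 h1
    calc (b.choose k : ℝ) * q ^ k * (1 - q) ^ (b - k)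
        ≤ (b.choose k : ℝ) * 1 * (1 - q) ^ (b - k) := by
          apply mul_le_mul_of_nonneg_right _ (by apply pow_nonneg; linarith)
          apply mul_le_mul_of_nonneg_left h3 (by positivity)
      _ = (b.choose k : ℝ) * (1 - q) ^ (b - k) := by ring
      _ ≤ (b.choose k : ℝ) * (1-q) ^ 2 := mul_le_mul_of_nonneg_left h2 (by positivity)
  have hch : ∑ k ∈ range θ, (b.choose k : ℝ) ≤ 2^b := by
    calc ∑ k ∈ range θ, (b.choose k : ℝ)
        ≤ ∑ k ∈ Finset.range (b+1), (b.choose k : ℝ) := by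
          apply Finset.sum_le_sum_of_subset_of_nonneg
          · intro k hk; simp only [Finset.mem_range] at *; omega
          · intro k _ _; positivity
      _ = 2^b := by rw [← Nat.cast_sum, Nat.sum_range_choose]; push_cast; ring
  have heq : ∑ k ∈ range θ, (b.choose k : ℝ) * (1-q) ^ 2
      = (∑ k ∈ range θ, (b.choose k : ℝ)) * (1-q)^2 := by rw [← Finset.sum_mul]
  nlinarith [sq_nonneg (1-q)]

noncomputable def myG (b θ : ℕ) (q : ℝ) : ℝ := (q - myBin b θ q) / (1 - myBin b θ q)

lemma W_factor (b θ : ℕ) (p q : ℝ) (hd : 1 - myBin b θ q ≠ 0) :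
    p + (1 - p) * myBin b θ q - q = (1 - myBin b θ q) * (p - myG b θ q) := by
  unfold myG
  field_simp
  ring

theorem exists_pT (b θ : ℕ) (hθ : 2 ≤ θ) (hb : θ < b) :
    ∃ pT ∈ Set.Ioo (0:ℝ) 1,
      IsLeast
        ((fun q : ℝ => pT + (1 - pT) * (∑ k ∈ Finset.Icc θ b, (b.choose k : ℝ) * q ^ k * (1 - q) ^ (b - k)) - q) ''
          Set.Icc (0:ℝ) 1) 0 ∧
      (∀ p : ℝ, 0 < p → p < pT →
        ∃ q ∈ Set.Icc (0:ℝ) 1,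
          p + (1 - p) * (∑ k ∈ Finset.Icc θ b, (b.choose k : ℝ) * q ^ k * (1 - q) ^ (b - k)) - q < 0) ∧
      (∀ p : ℝ, pT < p → p < 1 →
        ∀ q ∈ Set.Ico (0:ℝ) 1,
          0 < p + (1 - p) * (∑ k ∈ Finset.Icc θ b, (b.choose k : ℝ) * q ^ k * (1 - q) ^ (b - k)) - q) := by
  -- the small point q0 where g > 0
  set q0 : ℝ := 1 / 2^(b+1) with hq0def
  have h2b : (0:ℝ) < 2^b := by positivity
  have hq0pos : 0 < q0 := by positivity
  have hq0half : q0 ≤ 1/2 := by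
    rw [hq0def]
    apply div_le_div_of_nonneg_left (by norm_num) (by norm_num)
    calc (2:ℝ) = 2^1 := by norm_num
      _ ≤ 2^(b+1) := by apply pow_le_pow_right₀ (by norm_num); omega
  have hq0lt1 : q0 < 1 := by linarith
  have hBq0 : myBin b θ q0 ≤ q0 / 2 := by
    have h1 : myBin b θ q0 ≤ 2^b * q0^2 := myBin_le b θ hθ hq0pos.le hq0lt1.le
    have h2 : (2:ℝ)^b * q0 = 1/2 := by
      rw [hq0def, pow_succ]
      field_simp
    nlinarith
  have hdq0 : 0 < 1 - myBin b θ q0 := one_sub_myBin_pos b θ hθ hb.le hq0pos.le hq0lt1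
  have hgq0pos : 0 < myG b θ q0 := by
    apply div_pos _ hdq0
    linarith
  have hgq0lt1 : myG b θ q0 < 1 := by
    rw [myG, div_lt_one hdq0]
    linarith
  set c : ℝ := 1 - myG b θ q0 with hcdef
  have hcpos : 0 < c := by simp only [hcdef]; linarith
  have hcle1 : c ≤ 1 := by simp only [hcdef]; linarith
  set ε : ℝ := min (c / 2^b) (1 - q0) with hεdef
  have hεpos : 0 < ε := lt_min (by positivity) (by linarith)
  have hεle : ε ≤ 1 - q0 := min_le_right _ _
  have hεle2 : ε ≤ c / 2^b := min_le_left _ _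
  set A : Set ℝ := Set.Icc (0:ℝ) (1 - ε) with hAdef
  have hq0A : q0 ∈ A := ⟨hq0pos.le, by linarith⟩
  have hsub1 : ∀ q ∈ A, q < 1 := fun q hq => by
    have := hq.2; linarith
  have hgcont : ContinuousOn (myG b θ) A := by
    apply ContinuousOn.div
    · exact (continuous_id.sub (myBin_cont b θ)).continuousOn
    · exact (continuous_const.sub (myBin_cont b θ)).continuousOn
    · intro q hq
      have := one_sub_myBin_pos b θ hθ hb.le hq.1 (hsub1 q hq)
      linarith
  obtain ⟨qs, hqsA, hmax⟩ := isCompact_Icc.exists_isMaxOn ⟨q0, hq0A⟩ hgcont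
  set pT : ℝ := myG b θ qs with hpTdef
  have hqs0 : 0 ≤ qs := hqsA.1
  have hqs1 : qs < 1 := hsub1 qs hqsA
  have hdqs : 0 < 1 - myBin b θ qs := one_sub_myBin_pos b θ hθ hb.le hqs0 hqs1
  have hpTpos : 0 < pT := lt_of_lt_of_le hgq0pos (hmax hq0A)
  have hpTlt1 : pT < 1 := by
    rw [hpTdef, myG, div_lt_one hdqs]
    linarith
  -- the key upper bound: g q ≤ pT for all q ∈ [0,1)
  have hub : ∀ q : ℝ, 0 ≤ q → q < 1 → myG b θ q ≤ pT := by
    intro q h0 h1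
    by_cases hc : q ≤ 1 - ε
    · exact hmax ⟨h0, hc⟩
    · push_neg at hc
      have h1q : 1 - q < ε := by linarith
      have hd : 0 < 1 - myBin b θ q := one_sub_myBin_pos b θ hθ hb.le h0 h1
      have hup : 1 - myBin b θ q ≤ c * (1 - q) := by
        have hA := one_sub_myBin_le b θ hθ hb h0 h1.le
        have h2 : (2:ℝ)^b * (1 - q) ≤ c := by
          have : 1 - q ≤ c / 2^b := by linarith
          calc (2:ℝ)^b * (1 - q) ≤ 2^b * (c / 2^b) := by
                apply mul_le_mul_of_nonneg_left this h2b.le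
            _ = c := by field_simp
        nlinarith
      -- show g q ≤ g q0
      have hgle : myG b θ q ≤ myG b θ q0 := by
        have h1g : 1 - myG b θ q = (1 - q) / (1 - myBin b θ q) := by
          rw [myG]
          field_simp
          ring
        have hge : c ≤ (1 - q) / (1 - myBin b θ q) := by
          rw [le_div_iff₀ hd]
          nlinarith
        rw [← h1g] at hge
        linarith [hcdef]
      exact le_trans hgle (hmax hq0A)
  refine ⟨pT, ⟨hpTpos, hpTlt1⟩, ⟨?_, ?_⟩, ?_, ?_⟩
  · -- 0 ∈ image
    refine ⟨1, ⟨zero_le_one, le_refl 1⟩, ?_⟩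
    show pT + (1 - pT) * myBin b θ 1 - 1 = 0
    rw [myBin_one b θ hb.le]; ring
  · -- lower bound
    rintro y ⟨q, ⟨h0, h1⟩, rfl⟩
    show (0:ℝ) ≤ pT + (1 - pT) * myBin b θ q - q
    rcases eq_or_lt_of_le h1 with h | h
    · rw [h, myBin_one b θ hb.le]; ring_nf; exact le_refl 0
    · have hd : 0 < 1 - myBin b θ q := one_sub_myBin_pos b θ hθ hb.le h0 h
      rw [W_factor b θ pT q (ne_of_gt hd)]
      exact mul_nonneg hd.le (by linarith [hub q h0 h])
  · -- p < pT: negative somewhere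
    intro p hp0 hppT
    refine ⟨qs, ⟨hqs0, hqs1.le⟩, ?_⟩
    show p + (1 - p) * myBin b θ qs - qs < 0
    rw [W_factor b θ p qs (ne_of_gt hdqs)]
    exact mul_neg_of_pos_of_neg hdqs (by linarith)
  · -- p > pT: positive on [0,1)
    intro p hpTp hp1 q ⟨h0, h1⟩
    show (0:ℝ) < p + (1 - p) * myBin b θ q - q
    have hd : 0 < 1 - myBin b θ q := one_sub_myBin_pos b θ hθ hb.le h0 h1
    rw [W_factor b θ p q (ne_of_gt hd)]
    exact mul_pos hd (by linarith [hub q h0 h1])
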